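/- Let μ be a weighted partition of n (a multiset of pairs (mᵢ, δᵢ) with Σ mᵢ = n), decomposed as a disjoint union of nonempty sub-multisets π⁽¹⁾,…,π⁽ᵏ⁾. If for each k one has η_k − 1 = Σ_j (π⁽ᵏ⁾_j − 1) for positive integers η₁,…,η_k with Σ η_k = n, and the largest part of μ (in the size order) lies in π⁽ᵏ⁰⁾, then either η_{k₀} > μ₁ (the largest part of μ), or η_{k₀} = μ₁ and every other pair of π⁽ᵏ⁰⁾ has first coordinate 1. -/

import Mathlib

/-- the combinatorial dichotomy from the proof of Relation 1 in
Maulik–Pandharipande. Let `μ` be a weighted partition of `n` (a multiset of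
pairs `(m, δ)` with the `m`'s positive and summing to `n`), decomposed as a
disjoint union of nonempty sub-multisets `π k`. Suppose `η k − 1 = Σ_{j ∈ π k}
(π k)_j − 1` for positive integers `η k` summing to `n`, and the largest part
`p` of `μ` (in the size order; in particular `p.1` is the maximal first
coordinate) lies in `π k₀`. Then either `η k₀ > p.1`, or `η k₀ = p.1` and every
other pair of `π k₀` has first coordinate `1`. -/
theorem weighted_partition_dichotomy
    (W : Type) [DecidableEq W] (deg : W → ℕ) (n K : ℕ) (hK : 0 < K)
    (μ : Multiset (ℕ × W)) (π : Fin K → Multiset (ℕ × W)) (η : Fin K → ℕ)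
    (hpos : ∀ p ∈ μ, 0 < p.1)
    (hsum : (μ.map Prod.fst).sum = n)
    (hdecomp : μ = ∑ k, π k)
    (hne : ∀ k, π k ≠ 0)
    (hηpos : ∀ k, 0 < η k)
    (hηsum : ∑ k, η k = n)
    (hdim : ∀ k, η k - 1 = ((π k).map (fun p => p.1 - 1)).sum)
    (k₀ : Fin K) (p : ℕ × W) (hp : p ∈ π k₀)
    (hmax : ∀ q ∈ μ, q.1 ≤ p.1) :
    η k₀ > p.1 ∨ (η k₀ = p.1 ∧ ∀ q ∈ (π k₀).erase p, q.1 = 1) := by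
  have hsub : π k₀ ≤ μ := by
    rw [hdecomp]
    exact Finset.single_le_sum (f := π) (fun i _ => zero_le) (Finset.mem_univ k₀)
  have hposπ : ∀ q ∈ π k₀, 0 < q.1 := fun q hq => hpos q (Multiset.mem_of_le hsub hq)
  have hcons : p ::ₘ (π k₀).erase p = π k₀ := Multiset.cons_erase hp
  set S := (((π k₀).erase p).map (fun q => q.1 - 1)).sum with hS
  have hkey : η k₀ - 1 = (p.1 - 1) + S := by
    rw [hdim k₀, ← hcons, Multiset.map_cons, Multiset.sum_cons]
  have hp1 : 0 < p.1 := hposπ p hp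
  have hη : 0 < η k₀ := hηpos k₀
  have heq : η k₀ = p.1 + S := by omega
  rcases Nat.eq_zero_or_pos S with h0 | hpos'
  · right
    refine ⟨by omega, fun q hq => ?_⟩
    have hq0 : q.1 - 1 = 0 := by
      have := Multiset.sum_eq_zero_iff.mp h0 (q.1 - 1) (Multiset.mem_map_of_mem _ hq)
      exact this
    have := hposπ q (Multiset.mem_of_le (Multiset.erase_le _ _) hq)
    omega
  · left; omega
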